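/- There is a constant C > 0 such that for every triple of signs (μ₁,μ₂,μ₃) ∈ {(+,+,+), (+,-,-), (-,-,-)} and all ξ₁,ξ₂,ξ₃ ∈ ℝ, |Φ_{μ₁μ₂μ₃}(ξ₁,ξ₂,ξ₃)|⁻¹ ≤ C(1 + min{|ξ₁+ξ₂+ξ₃|, |ξ₁|, |ξ₂|, |ξ₃|}), where Φ_{μ₁μ₂μ₃}(ξ₁,ξ₂,ξ₃) = -Λ(ξ₁+ξ₂+ξ₃) + μ₁Λ(ξ₁) + μ₂Λ(ξ₂) + μ₃Λ(ξ₃) and Λ(ξ)=√(1+ξ²). -/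
import Mathlib


/-- Λ(ξ) = √(1+ξ²) -/
noncomputable def Lam (ξ : ℝ) : ℝ := Real.sqrt (1 + ξ ^ 2)

lemma lam_nonneg (ξ : ℝ) : 0 ≤ Lam ξ := Real.sqrt_nonneg _

lemma lam_sq (ξ : ℝ) : Lam ξ ^ 2 = 1 + ξ ^ 2 := Real.sq_sqrt (by positivity)

lemma one_le_lam (ξ : ℝ) : 1 ≤ Lam ξ := by
  nlinarith [lam_sq ξ, lam_nonneg ξ, sq_nonneg ξ]

lemma abs_le_lam (ξ : ℝ) : |ξ| ≤ Lam ξ := by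
  nlinarith [lam_sq ξ, lam_nonneg ξ, sq_abs ξ, abs_nonneg ξ]

lemma lam_le (ξ : ℝ) : Lam ξ ≤ 1 + |ξ| := by
  nlinarith [lam_sq ξ, lam_nonneg ξ, sq_abs ξ, abs_nonneg ξ]

lemma lam_neg (ξ : ℝ) : Lam (-ξ) = Lam ξ := by simp [Lam]

lemma lam_lip (x y : ℝ) : Lam x ≤ Lam y + |x - y| := by
  have h1 : y * (x - y) ≤ Lam y * |x - y| := by
    calc y * (x - y) ≤ |y * (x - y)| := le_abs_self _
    _ = |y| * |x - y| := abs_mul _ _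
    _ ≤ Lam y * |x - y| := by
        exact mul_le_mul_of_nonneg_right (abs_le_lam y) (abs_nonneg _)
  nlinarith [lam_sq x, lam_sq y, lam_nonneg x, lam_nonneg y, abs_nonneg (x - y),
    sq_abs (x - y), h1]

lemma lam_gap (ξ : ℝ) : 1 / (2 * (1 + |ξ|)) ≤ Lam ξ - |ξ| := by
  have hmul : (Lam ξ - |ξ|) * (Lam ξ + |ξ|) = 1 := by
    have h1 := lam_sq ξ
    have h2 := sq_abs ξ
    nlinarith [h1, h2]
  rw [div_le_iff₀ (by positivity)]
  nlinarith [hmul, lam_le ξ, abs_le_lam ξ, abs_nonneg ξ,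
    mul_nonneg (sub_nonneg.2 (abs_le_lam ξ)) (sub_nonneg.2 (lam_le ξ))]

lemma mink2 (a b : ℝ) : Real.sqrt (4 + (a + b) ^ 2) ≤ Lam a + Lam b := by
  have hprod : (Lam a * Lam b) ^ 2 = (1 + a ^ 2) * (1 + b ^ 2) := by
    rw [mul_pow, lam_sq, lam_sq]
  have key : 1 + a * b ≤ Lam a * Lam b := by
    nlinarith [hprod, one_le_lam a, one_le_lam b, sq_nonneg (a - b),
      mul_le_mul (one_le_lam a) (one_le_lam b) zero_le_one (lam_nonneg a)]
  have h : Real.sqrt (4 + (a + b) ^ 2) ≤ Real.sqrt ((Lam a + Lam b) ^ 2) := by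
    apply Real.sqrt_le_sqrt
    nlinarith [lam_sq a, lam_sq b, key]
  rwa [Real.sqrt_sq (by exact add_nonneg (lam_nonneg a) (lam_nonneg b))] at h

lemma lam_tri (a b : ℝ) : Lam (a + b) ≤ Lam a + Lam b := by
  refine le_trans ?_ (mink2 a b)
  unfold Lam
  apply Real.sqrt_le_sqrt
  nlinarith

lemma mink3 (a b c : ℝ) : Real.sqrt (9 + (a + b + c) ^ 2) ≤ Lam a + Lam b + Lam c := by
  set x := a + b with hx
  set u := Real.sqrt (4 + x ^ 2) with hu
  have hu2 : u ^ 2 = 4 + x ^ 2 := Real.sq_sqrt (by positivity)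
  have hu0 : 0 ≤ u := Real.sqrt_nonneg _
  have hu_ge2 : 2 ≤ u := by nlinarith [hu2, hu0]
  have hprod : (u * Lam c) ^ 2 = (4 + x ^ 2) * (1 + c ^ 2) := by
    rw [mul_pow, hu2, lam_sq]
  have key : 2 + x * c ≤ u * Lam c := by
    nlinarith [hprod, sq_nonneg (x - 2 * c), one_le_lam c, hu_ge2,
      mul_le_mul hu_ge2 (one_le_lam c) zero_le_one hu0]
  have step : Real.sqrt (9 + (x + c) ^ 2) ≤ u + Lam c := by
    have h : Real.sqrt (9 + (x + c) ^ 2) ≤ Real.sqrt ((u + Lam c) ^ 2) := by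
      apply Real.sqrt_le_sqrt
      nlinarith [hu2, lam_sq c, key]
    rwa [Real.sqrt_sq (add_nonneg hu0 (lam_nonneg c))] at h
  calc Real.sqrt (9 + (a + b + c) ^ 2) ≤ u + Lam c := step
  _ ≤ Lam a + Lam b + Lam c := by linarith [mink2 a b]

lemma G_ge_s (a b c : ℝ) :
    1 / (2 * (1 + |a + b + c|)) ≤ Lam a + Lam b + Lam c - Lam (a + b + c) := by
  set s := a + b + c with hs
  set u := Real.sqrt (9 + s ^ 2) with hu
  have hu2 : u ^ 2 = 9 + s ^ 2 := Real.sq_sqrt (by positivity)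
  have hu0 : 0 ≤ u := Real.sqrt_nonneg _
  have hL := lam_sq s
  have hd : 0 ≤ u - Lam s := by nlinarith [lam_nonneg s]
  have hmul8 : (u - Lam s) * (u + Lam s) = 8 := by nlinarith
  have hu_le : u ≤ 3 + |s| := by nlinarith [sq_abs s, abs_nonneg s]
  have hden : 0 ≤ 4 + 4 * |s| - (u + Lam s) := by
    have := lam_le s
    linarith [abs_nonneg s]
  have hkey := mul_nonneg hd hden
  have hmink := mink3 a b c
  rw [div_le_iff₀ (by positivity)]
  nlinarith [hkey, hmul8, abs_nonneg s,
    mul_nonneg (sub_nonneg.2 hmink) (by positivity : (0:ℝ) ≤ 2 * (1 + |s|))]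

lemma keyG (a b c : ℝ) :
    1 / (2 * (1 + min (|a + b + c|) (min (|a|) (min (|b|) (|c|))))) ≤
      Lam a + Lam b + Lam c - Lam (a + b + c) := by
  have hA : 1 / (2 * (1 + |a|)) ≤ Lam a + Lam b + Lam c - Lam (a + b + c) := by
    have h1 : Lam (a + b + c) ≤ Lam b + Lam c + |a| := by
      calc Lam (a + b + c) ≤ Lam (b + c) + |a + b + c - (b + c)| := lam_lip _ _
      _ = Lam (b + c) + |a| := by rw [show a + b + c - (b + c) = a by ring]
      _ ≤ Lam b + Lam c + |a| := by linarith [lam_tri b c]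
    linarith [lam_gap a]
  have hB : 1 / (2 * (1 + |b|)) ≤ Lam a + Lam b + Lam c - Lam (a + b + c) := by
    have h1 : Lam (a + b + c) ≤ Lam a + Lam c + |b| := by
      calc Lam (a + b + c) ≤ Lam (a + c) + |a + b + c - (a + c)| := lam_lip _ _
      _ = Lam (a + c) + |b| := by rw [show a + b + c - (a + c) = b by ring]
      _ ≤ Lam a + Lam c + |b| := by linarith [lam_tri a c]
    linarith [lam_gap b]
  have hC : 1 / (2 * (1 + |c|)) ≤ Lam a + Lam b + Lam c - Lam (a + b + c) := by
    have h1 : Lam (a + b + c) ≤ Lam a + Lam b + |c| := by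
      calc Lam (a + b + c) ≤ Lam (a + b) + |a + b + c - (a + b)| := lam_lip _ _
      _ = Lam (a + b) + |c| := by rw [show a + b + c - (a + b) = c by ring]
      _ ≤ Lam a + Lam b + |c| := by linarith [lam_tri a b]
    linarith [lam_gap c]
  rcases le_total (|a + b + c|) (min (|a|) (min (|b|) (|c|))) with h | h
  · rw [min_eq_left h]; exact G_ge_s a b c
  · rw [min_eq_right h]
    rcases le_total (|a|) (min (|b|) (|c|)) with h2 | h2
    · rw [min_eq_left h2]; exact hA
    · rw [min_eq_right h2]
      rcases le_total (|b|) (|c|) with h3 | h3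
      · rw [min_eq_left h3]; exact hB
      · rw [min_eq_right h3]; exact hC

lemma inv_step {x y : ℝ} (hy : 0 < y) (h : 1 / (2 * y) ≤ |x|) : |x|⁻¹ ≤ 2 * y := by
  have h0 : (0:ℝ) < 1 / (2 * y) := by positivity
  have h2 := inv_anti₀ h0 h
  rwa [one_div, inv_inv] at h2

/-- Bound on the reciprocal of the cubic phase for the good sign triples
    (+,+,+), (+,-,-), (-,-,-):
    |Φ_{μ₁μ₂μ₃}(ξ₁,ξ₂,ξ₃)|⁻¹ ≤ C(1 + min{|ξ₁+ξ₂+ξ₃|, |ξ₁|, |ξ₂|, |ξ₃|}). -/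
theorem three_phase_inv_bound :
    ∃ C : ℝ, 0 < C ∧ ∀ μ₁ μ₂ μ₃ : ℝ,
      ((μ₁, μ₂, μ₃) = (1, 1, 1) ∨ (μ₁, μ₂, μ₃) = (1, -1, -1) ∨ (μ₁, μ₂, μ₃) = (-1, -1, -1)) →
      ∀ ξ₁ ξ₂ ξ₃ : ℝ,
        |(-Lam (ξ₁ + ξ₂ + ξ₃) + μ₁ * Lam ξ₁ + μ₂ * Lam ξ₂ + μ₃ * Lam ξ₃)|⁻¹ ≤
          C * (1 + min (|ξ₁ + ξ₂ + ξ₃|) (min (|ξ₁|) (min (|ξ₂|) (|ξ₃|)))) := by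
  refine ⟨2, two_pos, ?_⟩
  intro μ₁ μ₂ μ₃ hμ ξ₁ ξ₂ ξ₃
  have hm0 : 0 ≤ min (|ξ₁ + ξ₂ + ξ₃|) (min (|ξ₁|) (min (|ξ₂|) (|ξ₃|))) :=
    le_min (abs_nonneg _) (le_min (abs_nonneg _) (le_min (abs_nonneg _) (abs_nonneg _)))
  have hy : 0 < 1 + min (|ξ₁ + ξ₂ + ξ₃|) (min (|ξ₁|) (min (|ξ₂|) (|ξ₃|))) := by linarith
  rcases hμ with h | h | h
  · simp only [Prod.mk.injEq] at h
    obtain ⟨rfl, rfl, rfl⟩ := h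
    apply inv_step hy
    have hG := keyG ξ₁ ξ₂ ξ₃
    calc 1 / (2 * (1 + min (|ξ₁ + ξ₂ + ξ₃|) (min (|ξ₁|) (min (|ξ₂|) (|ξ₃|)))))
        ≤ -Lam (ξ₁ + ξ₂ + ξ₃) + 1 * Lam ξ₁ + 1 * Lam ξ₂ + 1 * Lam ξ₃ := by linarith
      _ ≤ |(-Lam (ξ₁ + ξ₂ + ξ₃) + 1 * Lam ξ₁ + 1 * Lam ξ₂ + 1 * Lam ξ₃)| := le_abs_self _
  · simp only [Prod.mk.injEq] at h
    obtain ⟨rfl, rfl, rfl⟩ := h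
    apply inv_step hy
    have hG := keyG (ξ₁ + ξ₂ + ξ₃) (-ξ₂) (-ξ₃)
    rw [show ξ₁ + ξ₂ + ξ₃ + -ξ₂ + -ξ₃ = ξ₁ from by ring] at hG
    simp only [lam_neg, abs_neg] at hG
    rw [min_left_comm] at hG
    calc 1 / (2 * (1 + min (|ξ₁ + ξ₂ + ξ₃|) (min (|ξ₁|) (min (|ξ₂|) (|ξ₃|)))))
        ≤ -(-Lam (ξ₁ + ξ₂ + ξ₃) + 1 * Lam ξ₁ + (-1) * Lam ξ₂ + (-1) * Lam ξ₃) := by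
          linarith
      _ ≤ |(-Lam (ξ₁ + ξ₂ + ξ₃) + 1 * Lam ξ₁ + (-1) * Lam ξ₂ + (-1) * Lam ξ₃)| :=
          neg_le_abs _
  · simp only [Prod.mk.injEq] at h
    obtain ⟨rfl, rfl, rfl⟩ := h
    apply inv_step hy
    have hhalf : 1 / (2 * (1 + min (|ξ₁ + ξ₂ + ξ₃|) (min (|ξ₁|) (min (|ξ₂|) (|ξ₃|))))) ≤ 1 / 2 := by
      rw [div_le_div_iff₀ (by positivity) two_pos]
      linarith
    calc 1 / (2 * (1 + min (|ξ₁ + ξ₂ + ξ₃|) (min (|ξ₁|) (min (|ξ₂|) (|ξ₃|)))))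
        ≤ -(-Lam (ξ₁ + ξ₂ + ξ₃) + (-1) * Lam ξ₁ + (-1) * Lam ξ₂ + (-1) * Lam ξ₃) := by
          linarith [one_le_lam (ξ₁ + ξ₂ + ξ₃), one_le_lam ξ₁, one_le_lam ξ₂, one_le_lam ξ₃]
      _ ≤ |(-Lam (ξ₁ + ξ₂ + ξ₃) + (-1) * Lam ξ₁ + (-1) * Lam ξ₂ + (-1) * Lam ξ₃)| :=
          neg_le_abs _
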